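/- Let μ_n denote the average number of summands in the Zeckendorf decomposition of integers N ∈ [F_n, F_{n+1}), i.e., μ_n = (Σ_{N=F_n}^{F_{n+1}−1} z(N))/(F_{n+1} − F_n) where z(N) is the number of summands of N. Then with φ = (1+√5)/2 there exists a constant M such that |μ_n − n/(φ² + 1)| ≤ M for all n ≥ 1; in particular μ_n/n → 1/(φ² + 1) as n → ∞. -/

import Mathlib

/-- `F n` is the Fibonacci number in the convention `F 1 = 1, F 2 = 2`,
`F (n+1) = F n + F (n-1)`, i.e. `F n = fib (n+1)`. -/
def F (n : ℕ) : ℕ := Nat.fib (n + 1)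

/-- A Zeckendorf decomposition of `N`: a finite set `S` of positive indices
containing no two consecutive integers with `N = ∑_{i ∈ S} F i`. -/
def IsZeckendorf (N : ℕ) (S : Finset ℕ) : Prop :=
  (∀ i ∈ S, 1 ≤ i) ∧ (∀ i ∈ S, i + 1 ∉ S) ∧ ∑ i ∈ S, F i = N

/-- The average number of Zeckendorf summands of integers in `[F n, F (n+1))`. -/
noncomputable def zeckMean (z : ℕ → ℕ) (n : ℕ) : ℝ :=
  (∑ N ∈ Finset.Ico (F n) (F (n + 1)), (z N : ℝ)) / ((F (n + 1) : ℝ) - (F n : ℝ))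

open Finset
open Real

lemma F_pos (n : ℕ) : 0 < F n := Nat.fib_pos.2 (by omega)

lemma F_mono : Monotone F := fun a b h => Nat.fib_mono (by omega)

lemma le_F : ∀ n, n ≤ F n := by
  intro n
  induction n with
  | zero => exact Nat.zero_le _
  | succ k ih =>
    have hfk : F (k + 1) = Nat.fib k + F k := Nat.fib_add_two
    rcases Nat.eq_zero_or_pos k with rfl | hk
    · decide
    · have h1 : 1 ≤ Nat.fib k := Nat.fib_pos.2 hk
      omega

lemma F_add (n : ℕ) (hn : 1 ≤ n) : F (n + 1) = F n + F (n - 1) := by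
  obtain ⟨m, rfl⟩ : ∃ m, n = m + 1 := ⟨n - 1, by omega⟩
  show Nat.fib (m + 1 + 1 + 1) = Nat.fib (m + 1 + 1) + F (m + 1 - 1)
  have h1 : F (m + 1 - 1) = Nat.fib (m + 1) := rfl
  rw [h1]
  have h2 : Nat.fib (m + 1 + 1 + 1) = Nat.fib (m + 1) + Nat.fib (m + 1 + 1) :=
    Nat.fib_add_two (n := m + 1)
  omega

lemma zeck_lt {N : ℕ} {S : Finset ℕ} (h : IsZeckendorf N S) {m : ℕ}
    (hm : N < F m) : ∀ i ∈ S, i < m := by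
  intro i hi
  by_contra hc
  push_neg at hc
  have h1 : F m ≤ F i := F_mono hc
  have h2 : F i ≤ ∑ j ∈ S, F j := Finset.single_le_sum (fun j _ => Nat.zero_le _) hi
  rw [h.2.2] at h2
  omega

lemma zeck_exists : ∀ N, ∃ S, IsZeckendorf N S := by
  intro N
  induction N using Nat.strong_induction_on with
  | _ N ih =>
    rcases Nat.eq_zero_or_pos N with rfl | hN
    · exact ⟨∅, by simp [IsZeckendorf]⟩
    · have hF1 : F 1 = 1 := rfl
      obtain ⟨n, hn1, hFn, hnN, hlt⟩ :
          ∃ n, 1 ≤ n ∧ F n ≤ N ∧ n ≤ N ∧ N < F (n + 1) := by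
        refine ⟨Nat.findGreatest (fun k => F k ≤ N) N,
          Nat.le_findGreatest hN (by show F 1 ≤ N; omega),
          Nat.findGreatest_spec (P := fun k => F k ≤ N) hN (by show F 1 ≤ N; omega),
          Nat.findGreatest_le N, ?_⟩
        rcases Nat.lt_or_ge N (Nat.findGreatest (fun k => F k ≤ N) N + 1) with h | h
        · have hge := Nat.findGreatest_le (P := fun k => F k ≤ N) N
          have heq : Nat.findGreatest (fun k => F k ≤ N) N = N := by omega
          have hN1 := le_F (N + 1)
          by_contra hc
          push_neg at hc
          rw [heq] at hc
          omega
        · by_contra hc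
          push_neg at hc
          exact Nat.findGreatest_is_greatest (P := fun k => F k ≤ N)
            (Nat.lt_succ_self _) h hc
      have hr : N - F n < F (n - 1) := by
        have := F_add n hn1
        omega
      obtain ⟨S, hS⟩ := ih (N - F n) (by have := F_pos n; omega)
      have hSlt : ∀ i ∈ S, i < n - 1 := zeck_lt hS hr
      have hnS : n ∉ S := fun h => by have := hSlt n h; omega
      refine ⟨insert n S, ⟨?_, ?_, ?_⟩⟩
      · intro i hi
        rcases Finset.mem_insert.1 hi with rfl | hi
        · exact hn1
        · exact hS.1 i hi
      · intro i hi
        rcases Finset.mem_insert.1 hi with rfl | hi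
        · intro hc
          rcases Finset.mem_insert.1 hc with h | h
          · omega
          · have := hSlt _ h; omega
        · intro hc
          rcases Finset.mem_insert.1 hc with h | h
          · have := hSlt _ hi; omega
          · exact hS.2.1 i hi h
      · rw [Finset.sum_insert hnS, hS.2.2]
        omega

section withz

variable (z : ℕ → ℕ)
variable (hz : ∀ (N : ℕ) (S : Finset ℕ), IsZeckendorf N S → z N = S.card)

include hz

lemma z_zero : z 0 = 0 := by
  have := hz 0 ∅ (by simp [IsZeckendorf])
  simpa using this

lemma z_step {n r : ℕ} (hn : 1 ≤ n) (hr : r < F (n - 1)) :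
    z (F n + r) = z r + 1 := by
  obtain ⟨S, hS⟩ := zeck_exists r
  have hSlt : ∀ i ∈ S, i < n - 1 := zeck_lt hS hr
  have hnS : n ∉ S := fun h => by have := hSlt n h; omega
  have hins : IsZeckendorf (F n + r) (insert n S) := by
    refine ⟨?_, ?_, ?_⟩
    · intro i hi
      rcases Finset.mem_insert.1 hi with rfl | hi
      · exact hn
      · exact hS.1 i hi
    · intro i hi
      rcases Finset.mem_insert.1 hi with rfl | hi
      · intro hc
        rcases Finset.mem_insert.1 hc with h | h
        · omega
        · have := hSlt _ h; omega
      · intro hc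
        rcases Finset.mem_insert.1 hc with h | h
        · have := hSlt _ hi; omega
        · exact hS.2.1 i hi h
    · rw [Finset.sum_insert hnS, hS.2.2]
  rw [hz _ _ hins, hz _ _ hS, Finset.card_insert_of_notMem hnS]

lemma sum_Ico_z (m : ℕ) :
    ∑ N ∈ Finset.Ico (F (m + 1)) (F (m + 2)), z N
      = Nat.fib (m + 1) + ∑ r ∈ Finset.range (Nat.fib (m + 1)), z r := by
  have hF : F (m + 2) = F (m + 1) + Nat.fib (m + 1) := by
    simp [F, Nat.fib_add_two]; ring
  rw [Finset.sum_Ico_eq_sum_range]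
  have hsub : F (m + 2) - F (m + 1) = Nat.fib (m + 1) := by omega
  rw [hsub]
  have : ∀ i ∈ Finset.range (Nat.fib (m + 1)), z (F (m + 1) + i) = z i + 1 := by
    intro i hi
    exact z_step z hz (by omega) (by simpa [F] using Finset.mem_range.1 hi)
  rw [Finset.sum_congr rfl this, Finset.sum_add_distrib]
  simp [add_comm]

lemma A_closed : ∀ m : ℕ,
    (5 : ℤ) * ∑ r ∈ Finset.range (Nat.fib (m + 1)), (z r : ℤ)
      = 2 * m * Nat.fib (m + 1) - (m + 1) * Nat.fib m := by
  intro m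
  induction m using Nat.twoStepInduction with
  | zero => simp [z_zero z hz]
  | one => simp [z_zero z hz]
  | more m ih2 ih1 =>
    have hle : Nat.fib (m + 2) ≤ Nat.fib (m + 3) := Nat.fib_mono (by omega)
    have hsplit : ∑ r ∈ Finset.range (Nat.fib (m + 3)), (z r : ℤ)
        = ∑ r ∈ Finset.range (Nat.fib (m + 2)), (z r : ℤ)
          + ∑ r ∈ Finset.Ico (Nat.fib (m + 2)) (Nat.fib (m + 3)), (z r : ℤ) := by
      rw [Finset.range_eq_Ico, Finset.range_eq_Ico]
      exact (Finset.sum_Ico_consecutive (fun r => (z r : ℤ)) (Nat.zero_le _) hle).symm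
    have hIco : ∑ r ∈ Finset.Ico (Nat.fib (m + 2)) (Nat.fib (m + 3)), z r
        = Nat.fib (m + 1) + ∑ r ∈ Finset.range (Nat.fib (m + 1)), z r := by
      have := sum_Ico_z z hz m
      simpa [F] using this
    have hIco' : ∑ r ∈ Finset.Ico (Nat.fib (m + 2)) (Nat.fib (m + 3)), (z r : ℤ)
        = (Nat.fib (m + 1) : ℤ) + ∑ r ∈ Finset.range (Nat.fib (m + 1)), (z r : ℤ) := by
      exact_mod_cast congrArg (Nat.cast : ℕ → ℤ) hIco
    have h3 : Nat.fib (m + 3) = Nat.fib (m + 1) + Nat.fib (m + 2) := Nat.fib_add_two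
    have h2 : Nat.fib (m + 2) = Nat.fib m + Nat.fib (m + 1) := Nat.fib_add_two
    have hfib3 : (Nat.fib (m + 3) : ℤ) = Nat.fib (m + 1) + Nat.fib (m + 2) := by
      exact_mod_cast h3
    have hfib2 : (Nat.fib (m + 2) : ℤ) = Nat.fib m + Nat.fib (m + 1) := by
      exact_mod_cast h2
    rw [hsplit, hIco']
    simp only [show m + 1 + 1 = m + 2 from rfl] at ih1
    push_cast at ih1 ih2 ⊢
    simp only [show m + 2 + 1 = m + 3 from rfl]
    linear_combination ih1 + ih2 - (2 * (m : ℤ) + 4) * hfib3 + ((m : ℤ) + 1) * hfib2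

end withz

section mainestimates

variable (z : ℕ → ℕ)
variable (hz : ∀ (N : ℕ) (S : Finset ℕ), IsZeckendorf N S → z N = S.card)

include hz

lemma zeckMean_eq (m : ℕ) :
    zeckMean z (m + 1)
      = 1 + (∑ r ∈ Finset.range (Nat.fib (m + 1)), (z r : ℝ)) / (Nat.fib (m + 1) : ℝ) := by
  have hnum : ∑ N ∈ Finset.Ico (F (m + 1)) (F (m + 2)), (z N : ℝ)
      = (Nat.fib (m + 1) : ℝ) + ∑ r ∈ Finset.range (Nat.fib (m + 1)), (z r : ℝ) := by
    exact_mod_cast congrArg (Nat.cast : ℕ → ℝ) (sum_Ico_z z hz m)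
  have hFadd : F (m + 2) = F (m + 1) + Nat.fib (m + 1) := by
    show Nat.fib (m + 1 + 1 + 1) = Nat.fib (m + 1 + 1) + Nat.fib (m + 1)
    have h2 : Nat.fib (m + 1 + 1 + 1) = Nat.fib (m + 1) + Nat.fib (m + 1 + 1) :=
      Nat.fib_add_two (n := m + 1)
    omega
  have hden : (F (m + 2) : ℝ) - (F (m + 1) : ℝ) = (Nat.fib (m + 1) : ℝ) := by
    rw [hFadd]; push_cast; ring
  have hfpos : (0 : ℝ) < (Nat.fib (m + 1) : ℝ) := by
    exact_mod_cast Nat.fib_pos.2 (by omega)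
  unfold zeckMean
  rw [hnum, hden]
  field_simp

lemma A_closed_real (m : ℕ) :
    (5 : ℝ) * ∑ r ∈ Finset.range (Nat.fib (m + 1)), (z r : ℝ)
      = 2 * m * Nat.fib (m + 1) - (m + 1) * Nat.fib m := by
  have := A_closed z hz m
  exact_mod_cast congrArg (Int.cast : ℤ → ℝ) this

lemma diff_formula (m : ℕ) :
    zeckMean z (m + 1) - ((m : ℝ) + 1) / (((1 + Real.sqrt 5) / 2) ^ 2 + 1)
      = 3 / 5 + ((m : ℝ) + 1) * goldenConj ^ m
          / (5 * goldenRatio * (Nat.fib (m + 1) : ℝ)) := by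
  have hs : Real.sqrt 5 ^ 2 = 5 := Real.sq_sqrt (by norm_num)
  have hs2 : (2 : ℝ) ≤ Real.sqrt 5 := by
    nlinarith [Real.sqrt_nonneg 5]
  have hgpos : (0 : ℝ) < goldenRatio := goldenRatio_pos
  have hfpos : (0 : ℝ) < (Nat.fib (m + 1) : ℝ) := by
    exact_mod_cast Nat.fib_pos.2 (by omega)
  have hg2 : goldenRatio ^ 2 = goldenRatio + 1 := goldenRatio_sq
  have hg21 : (0 : ℝ) < goldenRatio ^ 2 + 1 := by positivity
  have hpsi : (Nat.fib (m + 1) : ℝ) - goldenRatio * (Nat.fib m : ℝ) = goldenConj ^ m :=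
    fib_succ_sub_goldenRatio_mul_fib m
  have hA := A_closed_real z hz m
  rw [zeckMean_eq z hz m]
  set g : ℝ := goldenRatio with hgdef
  set q : ℝ := goldenConj ^ m with hqdef
  set f1 : ℝ := (Nat.fib (m + 1) : ℝ) with hf1def
  set f0 : ℝ := (Nat.fib m : ℝ) with hf0def
  set A : ℝ := ∑ r ∈ Finset.range (Nat.fib (m + 1)), (z r : ℝ) with hAdef
  have e1 : A / f1 = 2 * m / 5 - ((m : ℝ) + 1) / 5 * (f0 / f1) := by
    field_simp
    linear_combination hA
  have e2 : f0 / f1 = 1 / g - q / (g * f1) := by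
    have hgf : g * f0 = f1 - q := by linarith
    rw [show f0 / f1 = (g * f0) / (g * f1) from (mul_div_mul_left _ _ (ne_of_gt hgpos)).symm,
      hgf, sub_div]
    congr 1
    rw [div_eq_div_iff (by positivity) (by positivity)]
    ring
  have q3 : 1 / (g ^ 2 + 1) = 2 / 5 - 1 / (5 * g) := by
    field_simp
    linear_combination (2 * g + 1) * hg2 + (-1 - 1 / 2 * Real.sqrt 5) * hs
  have e3 : ((m : ℝ) + 1) / (g ^ 2 + 1)
      = ((m : ℝ) + 1) * 2 / 5 - ((m : ℝ) + 1) / (5 * g) := by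
    rw [← mul_one_div ((m : ℝ) + 1) (g ^ 2 + 1), q3]
    ring
  have hrw : (((1 + Real.sqrt 5) / 2) ^ 2 + 1) = g ^ 2 + 1 := rfl
  rw [e1, e2, hrw, e3]
  field_simp
  ring

lemma diff_bound (m : ℕ) :
    |zeckMean z (m + 1) - ((m : ℝ) + 1) / (((1 + Real.sqrt 5) / 2) ^ 2 + 1)| ≤ 1 := by
  have hs : Real.sqrt 5 ^ 2 = 5 := Real.sq_sqrt (by norm_num)
  have hs2 : (2 : ℝ) ≤ Real.sqrt 5 := by nlinarith [Real.sqrt_nonneg 5]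
  have hs3 : Real.sqrt 5 ≤ 3 := by nlinarith [Real.sqrt_nonneg 5]
  have hgpos : (0 : ℝ) < goldenRatio := goldenRatio_pos
  have hg32 : (3 : ℝ) / 2 ≤ goldenRatio := by
    unfold goldenRatio; linarith
  have hg2 : goldenRatio ^ 2 = goldenRatio + 1 := goldenRatio_sq
  have hf1 : (1 : ℝ) ≤ (Nat.fib (m + 1) : ℝ) := by
    exact_mod_cast Nat.fib_pos.2 (by omega)
  have hfpos : (0 : ℝ) < (Nat.fib (m + 1) : ℝ) := by linarith
  -- |ψ| = goldenRatio - 1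
  have hpsiabs : |goldenConj| = goldenRatio - 1 := by
    rw [abs_of_neg goldenConj_neg]
    unfold goldenConj goldenRatio; ring
  -- Bernoulli
  have hb : 1 + (m : ℝ) * (goldenRatio - 1) ≤ goldenRatio ^ m := by
    have h := one_add_mul_le_pow (a := goldenRatio - 1) (by linarith) m
    have h1 : (1 : ℝ) + (goldenRatio - 1) = goldenRatio := by ring
    rwa [h1] at h
  have hgm : ((m : ℝ) + 1) / 2 ≤ goldenRatio ^ m := by
    have hm0 : (0 : ℝ) ≤ (m : ℝ) := Nat.cast_nonneg m
    nlinarith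
  have hprod : (goldenRatio - 1) ^ m * goldenRatio ^ m = 1 := by
    rw [← mul_pow]
    have : (goldenRatio - 1) * goldenRatio = 1 := by nlinarith [hg2]
    rw [this, one_pow]
  have hu : (0 : ℝ) < (goldenRatio - 1) ^ m := pow_pos (by linarith) m
  have hkey : ((m : ℝ) + 1) * (goldenRatio - 1) ^ m ≤ 2 := by
    have h2 := mul_le_mul_of_nonneg_left hgm hu.le
    nlinarith
  set E : ℝ := ((m : ℝ) + 1) * goldenConj ^ m / (5 * goldenRatio * (Nat.fib (m + 1) : ℝ))
    with hE
  have hEabs : |E| = ((m : ℝ) + 1) * (goldenRatio - 1) ^ m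
      / (5 * goldenRatio * (Nat.fib (m + 1) : ℝ)) := by
    rw [hE, abs_div, abs_mul, abs_pow, hpsiabs]
    congr 1
    · congr 1
      rw [abs_of_nonneg (by positivity)]
    · rw [abs_of_pos (by positivity)]
  have hden5 : (5 : ℝ) ≤ 5 * goldenRatio * (Nat.fib (m + 1) : ℝ) := by nlinarith
  have hEb : |E| ≤ 2 / 5 := by
    rw [hEabs]
    rw [div_le_div_iff₀ (by positivity) (by norm_num)]
    nlinarith [mul_nonneg (by positivity : (0:ℝ) ≤ ((m : ℝ) + 1) * (goldenRatio - 1) ^ m)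
      (by linarith : (0:ℝ) ≤ (Nat.fib (m + 1) : ℝ) - 1),
      mul_nonneg (by positivity : (0:ℝ) ≤ ((m : ℝ) + 1) * (goldenRatio - 1) ^ m)
      (by linarith : (0:ℝ) ≤ goldenRatio - 1)]
  rw [diff_formula z hz m]
  calc |3 / 5 + E| ≤ |(3 : ℝ) / 5| + |E| := abs_add_le _ _
    _ ≤ 3 / 5 + 2 / 5 := by
        rw [abs_of_nonneg (by norm_num : (0:ℝ) ≤ 3/5)]
        linarith
    _ = 1 := by norm_num

end mainestimates

/-- Lekkerkerker's theorem: with `φ = (1+√5)/2`, the average number `μ_n` of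
Zeckendorf summands of integers in `[F n, F (n+1))` satisfies
`|μ_n − n/(φ²+1)| ≤ M` for some constant `M`; in particular
`μ_n / n → 1/(φ²+1)`. -/
theorem lekkerkerker (z : ℕ → ℕ)
    (hz : ∀ (N : ℕ) (S : Finset ℕ), IsZeckendorf N S → z N = S.card) :
    (∃ M : ℝ, ∀ n : ℕ, 1 ≤ n →
        |zeckMean z n - n / (((1 + Real.sqrt 5) / 2) ^ 2 + 1)| ≤ M) ∧
    Filter.Tendsto (fun n : ℕ => zeckMean z n / n) Filter.atTop
      (nhds (1 / (((1 + Real.sqrt 5) / 2) ^ 2 + 1))) := by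
  have hs : Real.sqrt 5 ^ 2 = 5 := Real.sq_sqrt (by norm_num)
  have hs2 : (2 : ℝ) ≤ Real.sqrt 5 := by nlinarith [Real.sqrt_nonneg 5]
  have hCpos : (0 : ℝ) < ((1 + Real.sqrt 5) / 2) ^ 2 + 1 := by positivity
  have hbound : ∀ n : ℕ, 1 ≤ n →
      |zeckMean z n - n / (((1 + Real.sqrt 5) / 2) ^ 2 + 1)| ≤ 1 := by
    intro n hn
    obtain ⟨m, rfl⟩ : ∃ m, n = m + 1 := ⟨n - 1, by omega⟩
    have := diff_bound z hz m
    have hcast : ((m + 1 : ℕ) : ℝ) = (m : ℝ) + 1 := by push_cast; ring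
    rw [hcast]
    exact this
  refine ⟨⟨1, hbound⟩, ?_⟩
  set c : ℝ := 1 / (((1 + Real.sqrt 5) / 2) ^ 2 + 1) with hc
  have h0 : Filter.Tendsto (fun n : ℕ => zeckMean z n / n - c) Filter.atTop (nhds 0) := by
    apply squeeze_zero_norm' (a := fun n : ℕ => 1 / (n : ℝ))
    · filter_upwards [Filter.eventually_ge_atTop 1] with n hn
      have hnpos : (0 : ℝ) < (n : ℝ) := by exact_mod_cast hn
      have h1 := hbound n hn
      have h2 : zeckMean z n / n - c = (zeckMean z n - n / (((1 + Real.sqrt 5) / 2) ^ 2 + 1)) / n := by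
        rw [hc]
        field_simp
      rw [h2, Real.norm_eq_abs, abs_div, abs_of_pos hnpos]
      gcongr
    · exact tendsto_one_div_atTop_nhds_zero_nat
  have h1 := h0.add_const c
  rw [zero_add] at h1
  apply h1.congr
  intro n
  ring
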